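/- arXiv:1706.09718 — 2 statements merged into one kernel-verified Lean document; each statement's English description precedes it below -/
import Mathlib

section
/- Let u, z ∈ Ω_+ and, for α > 0, set x̃_α = (P((u + e/α)^{1/2})(z + u + e/α))^{1/2} and x_α = (P((u + e/α)^{−1/2}) x̃_α)² − e. Then x_α/α converges to z as α → 0⁺. -/
open Matrix Filter Topology

abbrev Mat (r : ℕ) : Type := Matrix (Fin r) (Fin r) ℝ

open Classical in
/-- the square root of a positive semidefinite matrix (junk value `0` otherwise) -/
noncomputable def msqrt {r : ℕ} (x : Mat r) : Mat r :=
  if h : x.PosSemidef then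
    (h.1.eigenvectorUnitary : Mat r) * diagonal ((↑) ∘ (√·) ∘ h.1.eigenvalues) *
      (star h.1.eigenvectorUnitary : Mat r)
  else 0

namespace XAux
variable {r : ℕ}

lemma star_coe_mul (U : Matrix.unitaryGroup (Fin r) ℝ) : star (U : Mat r) * U = 1 := by
  exact_mod_cast U.2.1

lemma coe_mul_star (U : Matrix.unitaryGroup (Fin r) ℝ) : (U : Mat r) * star (U : Mat r) = 1 := by
  exact_mod_cast U.2.2

lemma spectral (A : Mat r) (hA : A.IsHermitian) :
    A = (hA.eigenvectorUnitary : Mat r) * diagonal hA.eigenvalues *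
      star (hA.eigenvectorUnitary : Mat r) := by
  simpa using hA.spectral_theorem

lemma conj_diag_psd (U : Matrix.unitaryGroup (Fin r) ℝ) {d : Fin r → ℝ} (hd : ∀ i, 0 ≤ d i) :
    ((U : Mat r) * diagonal d * star (U : Mat r)).PosSemidef := by
  have h : (diagonal d).PosSemidef := posSemidef_diagonal_iff.2 hd
  simpa [Matrix.star_eq_conjTranspose] using h.mul_mul_conjTranspose_same (U : Mat r)

lemma psd_of_conj (U : Matrix.unitaryGroup (Fin r) ℝ) {A : Mat r}
    (h : ((U : Mat r) * A * star (U : Mat r)).PosSemidef) : A.PosSemidef := by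
  have h2 := h.conjTranspose_mul_mul_same (U : Mat r)
  have e : ((U : Mat r))ᴴ * ((U : Mat r) * A * star (U : Mat r)) * (U : Mat r) = A := by
    rw [← Matrix.star_eq_conjTranspose]
    calc star (U : Mat r) * ((U : Mat r) * A * star (U : Mat r)) * (U : Mat r)
        = (star (U : Mat r) * (U : Mat r)) * A * (star (U : Mat r) * (U : Mat r)) := by
          noncomm_ring
      _ = A := by rw [star_coe_mul]; simp
  rwa [e] at h2

lemma conj_const (U : Matrix.unitaryGroup (Fin r) ℝ) (c : ℝ) :
    (U : Mat r) * diagonal (fun _ => c) * star (U : Mat r) = c • 1 := by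
  have : (diagonal (fun _ => c) : Mat r) = c • 1 := by
    ext i j; by_cases h : i = j <;> simp [h]
  rw [this, mul_smul_comm, mul_one, smul_mul_assoc, coe_mul_star]

lemma conj_diag_sub (U : Matrix.unitaryGroup (Fin r) ℝ) (d e : Fin r → ℝ) :
    (U : Mat r) * diagonal (fun i => d i - e i) * star (U : Mat r)
      = (U : Mat r) * diagonal d * star (U : Mat r)
        - (U : Mat r) * diagonal e * star (U : Mat r) := by
  have : (diagonal (fun i => d i - e i) : Mat r) = diagonal d - diagonal e := by
    rw [Matrix.diagonal_sub]
  rw [this, Matrix.mul_sub, Matrix.sub_mul]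

/-- every psd matrix is bounded above by a scalar matrix -/
lemma exists_scalar_ub {A : Mat r} (hA : A.PosSemidef) :
    ∃ c : ℝ, 0 ≤ c ∧ (c • 1 - A).PosSemidef := by
  set c := ∑ i, hA.1.eigenvalues i with hc
  refine ⟨c, Finset.sum_nonneg fun i _ => hA.eigenvalues_nonneg i, ?_⟩
  set U := hA.1.eigenvectorUnitary
  have key : (U : Mat r) * diagonal (fun i => c - hA.1.eigenvalues i) * star (U : Mat r)
      = c • 1 - A := by
    rw [conj_diag_sub, conj_const, ← spectral A hA.1]
  rw [← key]
  refine conj_diag_psd U fun i => ?_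
  have := Finset.single_le_sum (f := hA.1.eigenvalues)
    (fun j _ => hA.eigenvalues_nonneg j) (Finset.mem_univ i)
  simp only [sub_nonneg, hc]
  exact this

/-- the sqrt squeeze lemma -/
lemma sqrt_squeeze {y : Mat r} (hy : y.PosSemidef) {a b : ℝ}
    (h1 : (y * y - a • 1).PosSemidef) (h2 : (b • 1 - y * y).PosSemidef) :
    (y - Real.sqrt a • 1).PosSemidef ∧ (Real.sqrt b • 1 - y).PosSemidef := by
  set μ := hy.1.eigenvalues with hμ
  set U := hy.1.eigenvectorUnitary with hU
  have hs : y = (U : Mat r) * diagonal μ * star (U : Mat r) := spectral y hy.1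
  have hyy : y * y = (U : Mat r) * diagonal (fun i => μ i * μ i) * star (U : Mat r) := by
    conv_lhs => rw [hs]
    calc ((U : Mat r) * diagonal μ * star (U : Mat r)) * ((U : Mat r) * diagonal μ * star (U : Mat r))
        = (U : Mat r) * diagonal μ * (star (U : Mat r) * (U : Mat r)) * diagonal μ * star (U : Mat r) := by
          noncomm_ring
      _ = (U : Mat r) * (diagonal μ * diagonal μ) * star (U : Mat r) := by
          rw [star_coe_mul]; noncomm_ring
      _ = (U : Mat r) * diagonal (fun i => μ i * μ i) * star (U : Mat r) := by
          rw [diagonal_mul_diagonal]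
  have hbd : ∀ i, a ≤ μ i * μ i ∧ μ i * μ i ≤ b := by
    intro i
    constructor
    · have e : (U : Mat r) * diagonal (fun i => μ i * μ i - a) * star (U : Mat r) = y * y - a • 1 := by
        rw [show (fun i => μ i * μ i - a) = (fun i => (μ i * μ i) - (fun _ : Fin r => a) i) from rfl,
          conj_diag_sub, conj_const, ← hyy]
      have := posSemidef_diagonal_iff.1 (psd_of_conj U (e ▸ h1)) i
      simpa [sub_nonneg] using this
    · have e : (U : Mat r) * diagonal (fun i => b - μ i * μ i) * star (U : Mat r) = b • 1 - y * y := by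
        rw [show (fun i => b - μ i * μ i) = (fun i => (fun _ : Fin r => b) i - (μ i * μ i)) from rfl,
          conj_diag_sub, conj_const, ← hyy]
      have := posSemidef_diagonal_iff.1 (psd_of_conj U (e ▸ h2)) i
      simpa [sub_nonneg] using this
  have hμnn : ∀ i, 0 ≤ μ i := fun i => hy.eigenvalues_nonneg i
  have hbd2 : ∀ i, Real.sqrt a ≤ μ i ∧ μ i ≤ Real.sqrt b := by
    intro i
    constructor
    · have : Real.sqrt a ≤ Real.sqrt (μ i * μ i) := Real.sqrt_le_sqrt (hbd i).1
      rwa [Real.sqrt_mul_self (hμnn i)] at this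
    · have : Real.sqrt (μ i * μ i) ≤ Real.sqrt b := Real.sqrt_le_sqrt (hbd i).2
      rwa [Real.sqrt_mul_self (hμnn i)] at this
  constructor
  · have e : (U : Mat r) * diagonal (fun i => μ i - Real.sqrt a) * star (U : Mat r)
        = y - Real.sqrt a • 1 := by
      rw [show (fun i => μ i - Real.sqrt a) = (fun i => μ i - (fun _ : Fin r => Real.sqrt a) i) from rfl,
        conj_diag_sub, conj_const, ← hs]
    rw [← e]; exact conj_diag_psd U fun i => by simpa [sub_nonneg] using (hbd2 i).1
  · have e : (U : Mat r) * diagonal (fun i => Real.sqrt b - μ i) * star (U : Mat r)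
        = Real.sqrt b • 1 - y := by
      rw [show (fun i => Real.sqrt b - μ i) = (fun i => (fun _ : Fin r => Real.sqrt b) i - μ i) from rfl,
        conj_diag_sub, conj_const, ← hs]
    rw [← e]; exact conj_diag_psd U fun i => by simpa [sub_nonneg] using (hbd2 i).2

lemma quad {B : Mat r} (h : B.PosSemidef) (v : Fin r → ℝ) : 0 ≤ v ⬝ᵥ B *ᵥ v := by
  simpa using h.dotProduct_mulVec_nonneg v

lemma herm_smul {A : Mat r} (hA : A.IsHermitian) (c : ℝ) : (c • A).IsHermitian := by
  unfold Matrix.IsHermitian at *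
  rw [Matrix.conjTranspose_smul, hA, star_trivial]

lemma psd_smul {A : Mat r} (hA : A.PosSemidef) {c : ℝ} (hc : 0 ≤ c) : (c • A).PosSemidef := by
  refine Matrix.PosSemidef.of_dotProduct_mulVec_nonneg (herm_smul hA.1 c) fun v => ?_
  rw [Matrix.smul_mulVec, dotProduct_smul, star_trivial]
  exact smul_nonneg hc (quad hA v)

lemma psd_scalar {c : ℝ} (hc : 0 ≤ c) : ((c • 1 : Mat r)).PosSemidef :=
  psd_smul Matrix.PosSemidef.one hc

lemma entry_bound {A : Mat r} {δ : ℝ} (h1 : (δ • 1 - A).PosSemidef) (h2 : (A + δ • 1).PosSemidef) :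
    ∀ i j, |A i j| ≤ 2 * δ := by
  have hH : A.IsHermitian := by
    have : (δ • (1:Mat r) - (δ • 1 - A)).IsHermitian :=
      (herm_smul Matrix.isHermitian_one δ).sub h1.1
    simpa using this
  have hdiag : ∀ i, -δ ≤ A i i ∧ A i i ≤ δ := by
    intro i
    have e1 : (Pi.single i 1 : Fin r → ℝ) ⬝ᵥ (δ • 1 - A) *ᵥ Pi.single i 1 = δ - A i i := by
      simp [Matrix.sub_mulVec, Matrix.mulVec_single, dotProduct_sub, dotProduct_single,
        Matrix.smul_mulVec, Matrix.one_apply, Pi.single_apply]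
    have e2 : (Pi.single i 1 : Fin r → ℝ) ⬝ᵥ (A + δ • 1) *ᵥ Pi.single i 1 = A i i + δ := by
      simp [Matrix.add_mulVec, Matrix.mulVec_single, dotProduct_add, dotProduct_single,
        Matrix.smul_mulVec, Matrix.one_apply, Pi.single_apply]
    have q1 := quad h1 (Pi.single i 1); have q2 := quad h2 (Pi.single i 1)
    rw [e1] at q1; rw [e2] at q2
    constructor <;> linarith
  intro i j
  have hδ : 0 ≤ δ := by have := hdiag i; linarith
  by_cases hij : i = j
  · subst hij
    have := hdiag i
    rw [abs_le]; constructor <;> linarith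
  · have hsym : A j i = A i j := by
      have := congrFun (congrFun hH.eq i) j
      simpa [Matrix.conjTranspose_apply] using this
    have e1 : ((Pi.single i 1 + Pi.single j 1 : Fin r → ℝ)) ⬝ᵥ
          (δ • 1 - A) *ᵥ (Pi.single i 1 + Pi.single j 1)
        = 2*δ - A i i - A j j - 2 * A i j := by
      simp [Matrix.sub_mulVec, Matrix.mulVec_add, Matrix.mulVec_single, dotProduct_sub,
        dotProduct_add, add_dotProduct, dotProduct_single, Matrix.smul_mulVec,
        Matrix.one_apply, Pi.single_apply, Pi.add_apply, hij, Ne.symm hij, hsym]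
      ring
    have e2 : ((Pi.single i 1 - Pi.single j 1 : Fin r → ℝ)) ⬝ᵥ
          (δ • 1 - A) *ᵥ (Pi.single i 1 - Pi.single j 1)
        = 2*δ - A i i - A j j + 2 * A i j := by
      simp [Matrix.sub_mulVec, Matrix.mulVec_sub, Matrix.mulVec_single, dotProduct_sub,
        sub_dotProduct, dotProduct_single, Matrix.smul_mulVec,
        Matrix.one_apply, Pi.single_apply, Pi.sub_apply, hij, Ne.symm hij, hsym]
      ring
    have q1 := quad h1 (Pi.single i 1 + Pi.single j 1)
    have q2 := quad h1 (Pi.single i 1 - Pi.single j 1)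
    rw [e1] at q1; rw [e2] at q2
    have hii := hdiag i; have hjj := hdiag j
    rw [abs_le]; constructor <;> linarith

lemma msqrt_psd {x : Mat r} (h : x.PosSemidef) : (msqrt x).PosSemidef := by
  unfold msqrt; rw [dif_pos h]
  exact conj_diag_psd _ fun i => by simp [Real.sqrt_nonneg]

lemma msqrt_mul_self {x : Mat r} (h : x.PosSemidef) : msqrt x * msqrt x = x := by
  unfold msqrt; rw [dif_pos h]
  set U := h.1.eigenvectorUnitary
  set D := diagonal ((↑) ∘ (√·) ∘ h.1.eigenvalues : Fin r → ℝ)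
  calc (U : Mat r) * D * star (U : Mat r) * ((U : Mat r) * D * star (U : Mat r))
      = (U : Mat r) * D * (star (U : Mat r) * (U : Mat r)) * D * star (U : Mat r) := by
        noncomm_ring
    _ = (U : Mat r) * (D * D) * star (U : Mat r) := by
        rw [star_coe_mul]; noncomm_ring
    _ = (U : Mat r) * diagonal h.1.eigenvalues * star (U : Mat r) := by
        congr 2
        rw [diagonal_mul_diagonal]
        congr 1; funext i
        simp [Real.mul_self_sqrt (h.eigenvalues_nonneg i)]
    _ = x := (spectral x h.1).symm

lemma conj_cancel {s m w c : Mat r} (hdet : IsUnit s.det) (hss : s * s = w)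
    (hmm : m * m = s * c * s) :
    (s⁻¹ * m * s⁻¹) * w * (s⁻¹ * m * s⁻¹) = c := by
  have h1 : s⁻¹ * s = 1 := Matrix.nonsing_inv_mul _ hdet
  have h2 : s * s⁻¹ = 1 := Matrix.mul_nonsing_inv _ hdet
  calc (s⁻¹ * m * s⁻¹) * w * (s⁻¹ * m * s⁻¹)
      = s⁻¹ * m * ((s⁻¹ * s) * (s * s⁻¹)) * m * s⁻¹ := by rw [← hss]; noncomm_ring
    _ = s⁻¹ * (m * m) * s⁻¹ := by rw [h1, h2]; noncomm_ring
    _ = (s⁻¹ * s) * c * (s * s⁻¹) := by rw [hmm]; noncomm_ring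
    _ = c := by rw [h1, h2]; noncomm_ring

end XAux

/-- **A limit lemma.**  For `u, z ∈ Ω₊`, let
`x̃_α = (P((u + e/α)^{1/2})(z + u + e/α))^{1/2}` and
`x_α = (P((u + e/α)^{-1/2}) x̃_α)² - e`, where `P(y)x = y x y`.
Then `x_α / α → z` as `α → 0⁺`. -/
theorem xAlpha_div_alpha_tendsto {r : ℕ} (u z : Mat r) (hu : u.PosDef) (hz : z.PosDef)
    (xt : ℝ → Mat r)
    (hxt : xt = fun α =>
      msqrt (msqrt (u + α⁻¹ • 1) * (z + u + α⁻¹ • 1) * msqrt (u + α⁻¹ • 1)))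
    (x : ℝ → Mat r)
    (hx : x = fun α =>
      ((msqrt (u + α⁻¹ • 1))⁻¹ * xt α * (msqrt (u + α⁻¹ • 1))⁻¹) ^ 2 - 1) :
    Tendsto (fun α : ℝ => α⁻¹ • x α) (𝓝[>] 0) (𝓝 z) := by
  set Y : ℝ → Mat r := fun α =>
    (msqrt (u + α⁻¹ • 1))⁻¹ * xt α * (msqrt (u + α⁻¹ • 1))⁻¹ with hYdef
  have bundle : ∀ α : ℝ, 0 < α →
      (α⁻¹ • x α = z + u - Y α * u * Y α) ∧ (Y α).PosSemidef ∧
        (Y α * (1 + α • u) * Y α = 1 + α • (z + u)) := by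
    intro α hα
    have hα' : (0:ℝ) < α⁻¹ := inv_pos.2 hα
    have psd1 : ((α⁻¹ : ℝ) • (1:Mat r)).PosSemidef := XAux.psd_scalar hα'.le
    have hw : (u + α⁻¹ • (1:Mat r)).PosDef := hu.add_posSemidef psd1
    have hzw : (z + u + α⁻¹ • (1:Mat r)).PosDef :=
      (hz.add_posSemidef hu.posSemidef).add_posSemidef psd1
    have hs_psd := XAux.msqrt_psd hw.posSemidef
    have hss := XAux.msqrt_mul_self hw.posSemidef
    set s := msqrt (u + α⁻¹ • (1:Mat r)) with hsdef
    have hdet : IsUnit s.det := by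
      have h1 : s.det * s.det = (u + α⁻¹ • (1:Mat r)).det := by rw [← Matrix.det_mul, hss]
      have h2 : (0:ℝ) < (u + α⁻¹ • (1:Mat r)).det := hw.det_pos
      exact isUnit_iff_ne_zero.2 (by intro h0; rw [h0, zero_mul] at h1; exact h2.ne' h1.symm)
    have hshs : sᴴ = s := hs_psd.1
    have hc_psd : (s * (z + u + α⁻¹ • 1) * s).PosSemidef := by
      have := hzw.posSemidef.conjTranspose_mul_mul_same s
      rwa [hshs] at this
    have hm_psd := XAux.msqrt_psd hc_psd
    have hmm := XAux.msqrt_mul_self hc_psd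
    have hxtα : xt α = msqrt (s * (z + u + α⁻¹ • 1) * s) := by rw [hxt]
    have hYα : Y α = s⁻¹ * msqrt (s * (z + u + α⁻¹ • 1) * s) * s⁻¹ := by
      rw [hYdef]; simp only []; rw [hxtα]
    have hy_psd : (Y α).PosSemidef := by
      rw [hYα]
      have := hm_psd.conjTranspose_mul_mul_same s⁻¹
      rwa [Matrix.conjTranspose_nonsing_inv, hshs] at this
    have hywy : Y α * (u + α⁻¹ • 1) * Y α = z + u + α⁻¹ • 1 := by
      rw [hYα]; exact XAux.conj_cancel hdet hss hmm
    have e1 : α • (u + α⁻¹ • (1:Mat r)) = 1 + α • u := by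
      rw [smul_add, smul_smul, mul_inv_cancel₀ hα.ne', one_smul]; abel
    have hKL : Y α * (1 + α • u) * Y α = 1 + α • (z + u) := by
      rw [← e1, Matrix.mul_smul, Matrix.smul_mul, hywy, smul_add, smul_add, smul_smul,
        mul_inv_cancel₀ hα.ne', one_smul]
      abel
    refine ⟨?_, hy_psd, hKL⟩
    have hxα : x α = (Y α) ^ 2 - 1 := by rw [hx]
    have expand : Y α * (u + α⁻¹ • 1) * Y α = Y α * u * Y α + α⁻¹ • (Y α * Y α) := by
      rw [Matrix.mul_add, Matrix.add_mul, Matrix.mul_smul, Matrix.smul_mul, mul_one]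
    rw [expand] at hywy
    have key : α⁻¹ • (Y α * Y α) = z + u + α⁻¹ • 1 - Y α * u * Y α := by
      rw [← hywy]; abel
    rw [hxα, pow_two, smul_sub, key]; abel
  obtain ⟨cu, hcu0, hcu⟩ := XAux.exists_scalar_ub hu.posSemidef
  obtain ⟨cz, hcz0, hcz⟩ := XAux.exists_scalar_ub (hz.add_posSemidef hu.posSemidef).posSemidef
  have hyto : Tendsto Y (𝓝[>] (0:ℝ)) (𝓝 (1 : Mat r)) := by
    have hbd : ∀ ε : ℝ, 0 < ε → ε ≤ 1 →
        ∀ᶠ α in 𝓝[>] (0:ℝ), ∀ i j, |(Y α - 1) i j| ≤ 2 * ε := by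
      intro ε hε hε1
      have hb : (0:ℝ) < min (ε / (cu + 1)) (ε / (cz + 1)) :=
        lt_min (div_pos hε (by linarith)) (div_pos hε (by linarith))
      have hev : Set.Ioo (0:ℝ) (min (ε / (cu+1)) (ε / (cz+1))) ∈ 𝓝[>] (0:ℝ) :=
        Ioo_mem_nhdsGT_of_mem ⟨le_refl 0, hb⟩
      filter_upwards [hev] with α hα
      obtain ⟨hα0, hαlt⟩ := hα
      obtain ⟨_, hy_psd, hKL⟩ := bundle α hα0
      have hαcu : α * cu ≤ ε := by
        have h1 : α < ε / (cu+1) := lt_of_lt_of_le hαlt (min_le_left _ _)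
        have h2 : α * (cu + 1) < ε := (lt_div_iff₀ (by linarith)).1 h1
        nlinarith
      have hαcz : α * cz ≤ ε := by
        have h1 : α < ε / (cz+1) := lt_of_lt_of_le hαlt (min_le_right _ _)
        have h2 : α * (cz + 1) < ε := (lt_div_iff₀ (by linarith)).1 h1
        nlinarith
      have hαu : (ε • (1:Mat r) - α • u).PosSemidef := by
        have h1 : (α • (cu • (1:Mat r) - u)).PosSemidef := XAux.psd_smul hcu hα0.le
        have h2 : (((ε - α * cu) • (1:Mat r))).PosSemidef :=
          XAux.psd_scalar (by linarith)
        have e : ε • (1:Mat r) - α • u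
            = (ε - α * cu) • (1:Mat r) + α • (cu • (1:Mat r) - u) := by module
        rw [e]; exact h2.add h1
      have hαzu : (ε • (1:Mat r) - α • (z + u)).PosSemidef := by
        have h1 : (α • (cz • (1:Mat r) - (z + u))).PosSemidef := XAux.psd_smul hcz hα0.le
        have h2 : (((ε - α * cz) • (1:Mat r))).PosSemidef :=
          XAux.psd_scalar (by linarith)
        have e : ε • (1:Mat r) - α • (z + u)
            = (ε - α * cz) • (1:Mat r) + α • (cz • (1:Mat r) - (z + u)) := by module
        rw [e]; exact h2.add h1
      have pK1 : ((1 + α • u) - 1 : Mat r).PosSemidef := by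
        have e : (1 + α • u) - (1:Mat r) = α • u := by abel
        rw [e]; exact XAux.psd_smul hu.posSemidef hα0.le
      have pL1 : ((1 + α • (z + u)) - 1 : Mat r).PosSemidef := by
        have e : (1 + α • (z + u)) - (1:Mat r) = α • (z + u) := by abel
        rw [e]; exact XAux.psd_smul (hz.add_posSemidef hu.posSemidef).posSemidef hα0.le
      have pK2 : ((1+ε) • (1:Mat r) - (1 + α • u)).PosSemidef := by
        have e : (1+ε) • (1:Mat r) - (1 + α • u) = ε • (1:Mat r) - α • u := by module
        rw [e]; exact hαu
      have pL2 : ((1+ε) • (1:Mat r) - (1 + α • (z + u))).PosSemidef := by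
        have e : (1+ε) • (1:Mat r) - (1 + α • (z + u)) = ε • (1:Mat r) - α • (z + u) := by
          module
        rw [e]; exact hαzu
      have hyH : (Y α)ᴴ = Y α := hy_psd.1
      have hA : ((1+ε) • (1:Mat r) - Y α * Y α).PosSemidef := by
        have t1 : (Y α * ((1 + α • u) - 1) * Y α).PosSemidef := by
          have := pK1.conjTranspose_mul_mul_same (Y α)
          rwa [hyH] at this
        have e : (1+ε) • (1:Mat r) - Y α * Y α
            = ((1+ε) • (1:Mat r) - (1 + α • (z + u))) + (Y α * ((1 + α • u) - 1) * Y α) := by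
          rw [Matrix.mul_sub, Matrix.sub_mul, hKL, mul_one]
          abel
        rw [e]; exact pL2.add t1
      have hB : (Y α * Y α - (1+ε)⁻¹ • (1:Mat r)).PosSemidef := by
        have t1 : (Y α * ((1+ε) • (1:Mat r) - (1 + α • u)) * Y α).PosSemidef := by
          have := pK2.conjTranspose_mul_mul_same (Y α)
          rwa [hyH] at this
        have e1 : Y α * ((1+ε) • (1:Mat r) - (1 + α • u)) * Y α
            = (1+ε) • (Y α * Y α) - (1 + α • (z + u)) := by
          rw [Matrix.mul_sub, Matrix.sub_mul, hKL, Matrix.mul_smul, Matrix.smul_mul,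
            mul_one]
        have t2 : (((1+ε) • (Y α * Y α) - 1 : Mat r)).PosSemidef := by
          have e2 : (1+ε) • (Y α * Y α) - (1:Mat r)
              = ((1+ε) • (Y α * Y α) - (1 + α • (z + u))) + ((1 + α • (z + u)) - 1) := by abel
          rw [e2]; exact (e1 ▸ t1).add pL1
        have e3 : Y α * Y α - (1+ε)⁻¹ • (1:Mat r) = (1+ε)⁻¹ • ((1+ε) • (Y α * Y α) - 1) := by
          rw [smul_sub, smul_smul, inv_mul_cancel₀ (by linarith : (1:ℝ)+ε ≠ 0), one_smul]
        rw [e3]; exact XAux.psd_smul t2 (by positivity)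
      obtain ⟨hlow, hhigh⟩ := XAux.sqrt_squeeze hy_psd hB hA
      have hsb : Real.sqrt (1+ε) ≤ 1 + ε := by
        have h1 : Real.sqrt (1+ε) ^ 2 = 1 + ε := Real.sq_sqrt (by linarith)
        nlinarith [Real.sqrt_nonneg (1+ε)]
      have hsa : 1 - ε ≤ Real.sqrt ((1+ε)⁻¹) := by
        rcases le_or_gt (1 - ε) 0 with h | h
        · exact h.trans (Real.sqrt_nonneg _)
        · rw [Real.le_sqrt h.le (by positivity)]
          have h3 : (1-ε)^2 * (1+ε) ≤ 1 := by nlinarith [mul_nonneg (mul_nonneg hε.le hε.le) h.le]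
          rw [inv_eq_one_div, le_div_iff₀ (by linarith)]
          linarith
      have p1 : (ε • (1:Mat r) - (Y α - 1)).PosSemidef := by
        have e : ε • (1:Mat r) - (Y α - 1)
            = (Real.sqrt (1+ε) • (1:Mat r) - Y α) + ((1 + ε - Real.sqrt (1+ε)) • (1:Mat r)) := by
          module
        rw [e]; exact hhigh.add (XAux.psd_scalar (by linarith))
      have p2 : ((Y α - 1) + ε • (1:Mat r)).PosSemidef := by
        have e : (Y α - 1) + ε • (1:Mat r)
            = (Y α - Real.sqrt ((1+ε)⁻¹) • (1:Mat r))
              + ((Real.sqrt ((1+ε)⁻¹) - (1 - ε)) • (1:Mat r)) := by module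
        rw [e]; exact hlow.add (XAux.psd_scalar (by linarith))
      exact XAux.entry_bound p1 p2
    refine tendsto_pi_nhds.2 fun i => ?_; refine tendsto_pi_nhds.2 fun j => ?_
    rw [Metric.tendsto_nhds]
    intro δ hδ
    have hε0 : (0:ℝ) < min (δ/4) 1 := lt_min (by linarith) one_pos
    filter_upwards [hbd (min (δ/4) 1) hε0 (min_le_right _ _)] with α hα
    have h1 := hα i j
    rw [Matrix.sub_apply] at h1
    rw [Real.dist_eq]
    have h2 : min (δ/4) 1 ≤ δ/4 := min_le_left _ _
    calc |Y α i j - (1:Mat r) i j| ≤ 2 * min (δ/4) 1 := h1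
      _ ≤ 2 * (δ/4) := by linarith
      _ < δ := by linarith
  have h2 : Tendsto (fun α => z + u - Y α * u * Y α) (𝓝[>] (0:ℝ)) (𝓝 z) := by
    have hm : Tendsto (fun α => Y α * u * Y α) (𝓝[>] (0:ℝ)) (𝓝 ((1:Mat r) * u * 1)) :=
      (hyto.mul tendsto_const_nhds).mul hyto
    have := (tendsto_const_nhds (x := z + u) (f := 𝓝[>] (0:ℝ))).sub hm
    simpa using this
  refine Tendsto.congr' ?_ h2
  filter_upwards [self_mem_nhdsWithin] with α hα
  exact ((bundle α hα).1).symm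
end

section
/- Let f, g : Ω_+ → ℝ be continuous functions satisfying f(x) + g(P((e+x)^{1/2})y) = g(y) + f(P((e+y)^{1/2})x) for all x, y ∈ Ω_+, and assume f(α·e) → 0 as α → 0⁺. Then f is additive: f(u) + f(z) = f(u+z) for all u, z ∈ Ω_+. -/
open Matrix Filter Topology

namespace AddAux

variable {r : ℕ}

lemma msqrt_eq_cfc {x : Mat r} (h : x.PosSemidef) : msqrt x = cfc Real.sqrt x := by
  unfold msqrt
  rw [dif_pos h, h.1.cfc_eq, IsHermitian.cfc, Unitary.conjStarAlgAut_apply]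
  rfl

lemma msqrt_posSemidef (x : Mat r) : (msqrt x).PosSemidef := by
  unfold msqrt
  split
  · rename_i h
    have hd : (diagonal ((↑) ∘ (√·) ∘ h.1.eigenvalues) : Mat r).PosSemidef :=
      PosSemidef.diagonal fun i => Real.sqrt_nonneg _
    have := hd.mul_mul_conjTranspose_same (h.1.eigenvectorUnitary : Mat r)
    simpa [star_eq_conjTranspose] using this
  · exact Matrix.PosSemidef.zero

lemma msqrt_mul_self {x : Mat r} (h : x.PosSemidef) : msqrt x * msqrt x = x := by
  rw [msqrt_eq_cfc h, ← cfc_mul Real.sqrt Real.sqrt x]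
  conv_rhs => rw [← cfc_id ℝ x (show IsSelfAdjoint x from h.1)]
  refine cfc_congr fun t ht => ?_
  have ht0 : 0 ≤ t := by
    rw [h.1.spectrum_real_eq_range_eigenvalues] at ht
    obtain ⟨i, rfl⟩ := ht
    exact h.eigenvalues_nonneg i
  simp [Real.mul_self_sqrt ht0]

lemma msqrt_isHermitian (x : Mat r) : (msqrt x).IsHermitian := (msqrt_posSemidef x).1

lemma posSemidef_smul {c : ℝ} (hc : 0 ≤ c) {M : Mat r} (hM : M.PosSemidef) :
    (c • M).PosSemidef := by
  refine PosSemidef.of_dotProduct_mulVec_nonneg ?_ fun x => ?_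
  · show (c • M)ᴴ = c • M
    rw [conjTranspose_smul, star_trivial, hM.1.eq]
  · rw [smul_mulVec, dotProduct_smul]
    exact smul_nonneg hc (hM.dotProduct_mulVec_nonneg x)

lemma posDef_smul {c : ℝ} (hc : 0 < c) {M : Mat r} (hM : M.PosDef) :
    (c • M).PosDef := by
  refine PosDef.of_dotProduct_mulVec_pos ?_ fun x hx => ?_
  · show (c • M)ᴴ = c • M
    rw [conjTranspose_smul, star_trivial, hM.1.eq]
  · rw [smul_mulVec, dotProduct_smul, smul_eq_mul]
    exact mul_pos hc (hM.dotProduct_mulVec_pos hx)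

lemma msqrt_smul_one {c : ℝ} (hc : 0 ≤ c) : msqrt (c • (1 : Mat r)) = Real.sqrt c • 1 := by
  have h1 : (c • (1 : Mat r)).PosSemidef := posSemidef_smul hc Matrix.PosSemidef.one
  have h2 : (Real.sqrt c • (1 : Mat r)).PosSemidef :=
    posSemidef_smul (Real.sqrt_nonneg c) Matrix.PosSemidef.one
  rw [msqrt_eq_cfc h1, ← Algebra.algebraMap_eq_smul_one, ← Algebra.algebraMap_eq_smul_one,
    cfc_algebraMap]

lemma mul_smul_one_mul (B : Mat r) (c : ℝ) : B * (c • (1 : Mat r)) * B = c • (B * B) := by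
  rw [mul_smul_comm, mul_one, smul_mul_assoc]

lemma form_abs_bound (M : Mat r) (x : Fin r → ℝ) :
    |x ⬝ᵥ (M *ᵥ x)| ≤ (∑ i, ∑ j, |M i j|) * (x ⬝ᵥ x) := by
  have hx2 : ∀ i, x i * x i ≤ x ⬝ᵥ x := fun i =>
    Finset.single_le_sum (f := fun k => x k * x k) (fun k _ => mul_self_nonneg _)
      (Finset.mem_univ i)
  have hxx : ∀ i j, |x i| * |x j| ≤ x ⬝ᵥ x := by
    intro i j
    nlinarith [hx2 i, hx2 j, sq_nonneg (|x i| - |x j|), abs_nonneg (x i), abs_nonneg (x j),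
      sq_abs (x i), sq_abs (x j)]
  have h1 : x ⬝ᵥ (M *ᵥ x) = ∑ i, ∑ j, x i * (M i j * x j) := by
    simp [dotProduct, mulVec, Finset.mul_sum]
  rw [h1]
  calc |∑ i, ∑ j, x i * (M i j * x j)| ≤ ∑ i, |∑ j, x i * (M i j * x j)| :=
        Finset.abs_sum_le_sum_abs _ _
    _ ≤ ∑ i, ∑ j, |x i * (M i j * x j)| :=
        Finset.sum_le_sum fun i _ => Finset.abs_sum_le_sum_abs _ _
    _ ≤ ∑ i, ∑ j, |M i j| * (x ⬝ᵥ x) := by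
        refine Finset.sum_le_sum fun i _ => Finset.sum_le_sum fun j _ => ?_
        rw [abs_mul, abs_mul]
        calc |x i| * (|M i j| * |x j|) = |M i j| * (|x i| * |x j|) := by ring
          _ ≤ |M i j| * (x ⬝ᵥ x) := by
              exact mul_le_mul_of_nonneg_left (hxx i j) (abs_nonneg _)
    _ = (∑ i, ∑ j, |M i j|) * (x ⬝ᵥ x) := by
        rw [Finset.sum_mul]
        exact Finset.sum_congr rfl fun i _ => (Finset.sum_mul _ _ _).symm


lemma dotProduct_self_nonneg' (x : Fin r → ℝ) : 0 ≤ x ⬝ᵥ x :=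
  Finset.sum_nonneg fun i _ => mul_self_nonneg _

lemma symm_dot {S : Mat r} (hS : S.IsHermitian) (v w : Fin r → ℝ) :
    v ⬝ᵥ (S *ᵥ w) = (S *ᵥ v) ⬝ᵥ w := by
  have hT : Sᵀ = S := by
    ext i j
    have h1 : S i j = S j i := by simpa using hS.apply j i
    rw [Matrix.transpose_apply]
    exact h1.symm
  rw [dotProduct_mulVec, ← mulVec_transpose, hT]

lemma entry_est {S : Mat r} (hS : S.PosSemidef) {ε : ℝ} (hε : 0 ≤ ε)
    (hT : ∀ x : Fin r → ℝ, |x ⬝ᵥ ((S * S) *ᵥ x) - x ⬝ᵥ x| ≤ ε * (x ⬝ᵥ x)) :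
    ∀ i j, |S i j - (1 : Mat r) i j| ≤ 2 * ε := by
  have hform : ∀ x : Fin r → ℝ, 0 ≤ x ⬝ᵥ (S *ᵥ x) := by
    intro x
    simpa using hS.dotProduct_mulVec_nonneg x
  have hsq : ∀ x : Fin r → ℝ, (S *ᵥ x) ⬝ᵥ (S *ᵥ x) = x ⬝ᵥ ((S * S) *ᵥ x) := by
    intro x
    rw [← mulVec_mulVec, symm_dot hS.1 x (S *ᵥ x)]
  -- upper bound on the form of S
  have hub : ∀ x : Fin r → ℝ, x ⬝ᵥ (S *ᵥ x) ≤ (1 + ε) * (x ⬝ᵥ x) := by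
    intro x
    have hn := dotProduct_self_nonneg' x
    have hcs : (x ⬝ᵥ (S *ᵥ x)) ^ 2 ≤ (x ⬝ᵥ x) * (x ⬝ᵥ ((S * S) *ᵥ x)) := by
      have h0 := Finset.sum_mul_sq_le_sq_mul_sq Finset.univ x (S *ᵥ x)
      have e1 : (∑ i, x i * (S *ᵥ x) i) = x ⬝ᵥ (S *ᵥ x) := rfl
      have e2 : (∑ i, x i ^ 2) = x ⬝ᵥ x := by
        simp [dotProduct, pow_two]
      have e3 : (∑ i, (S *ᵥ x) i ^ 2) = x ⬝ᵥ ((S * S) *ᵥ x) := by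
        rw [← hsq x]
        simp [dotProduct, pow_two]
      rwa [e1, e2, e3] at h0
    have hTub : x ⬝ᵥ ((S * S) *ᵥ x) ≤ (1 + ε) * (x ⬝ᵥ x) := by
      have := (abs_le.1 (hT x)).2
      linarith
    have h2 : (x ⬝ᵥ (S *ᵥ x)) ^ 2 ≤ ((1 + ε) * (x ⬝ᵥ x)) ^ 2 := by
      nlinarith [hcs, mul_le_mul_of_nonneg_left hTub hn, hn, hε,
        mul_nonneg (mul_nonneg hε hn) hn]
    have h3 := Real.sqrt_le_sqrt h2
    rwa [Real.sqrt_sq (hform x), Real.sqrt_sq (by positivity)] at h3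
  -- (1+ε)•1 - S is psd
  have hpsd1 : ((1 + ε) • (1 : Mat r) - S).PosSemidef := by
    refine PosSemidef.of_dotProduct_mulVec_nonneg ?_ fun x => ?_
    · show ((1 + ε) • (1 : Mat r) - S)ᴴ = (1 + ε) • (1 : Mat r) - S
      rw [conjTranspose_sub, conjTranspose_smul, star_trivial, conjTranspose_one, hS.1.eq]
    · rw [star_trivial, sub_mulVec, smul_mulVec, one_mulVec, dotProduct_sub,
        dotProduct_smul, smul_eq_mul]
      have := hub x
      linarith
  -- (1+ε)•S - S*S is psd
  have hkey : ((1 + ε) • S - S * S).PosSemidef := by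
    have hQ := msqrt_posSemidef S
    have hQQ := msqrt_mul_self hS
    have hconj := hpsd1.mul_mul_conjTranspose_same (msqrt S)
    have heq1 : msqrt S * ((1 + ε) • (1 : Mat r) - S) * (msqrt S)ᴴ
        = (1 + ε) • S - S * S := by
      rw [hQ.1.eq]
      rw [mul_sub, sub_mul, mul_smul_comm, mul_one, smul_mul_assoc, hQQ]
      congr 1
      calc msqrt S * S * msqrt S = msqrt S * (msqrt S * msqrt S) * msqrt S := by rw [hQQ]
        _ = (msqrt S * msqrt S) * (msqrt S * msqrt S) := by
            rw [← mul_assoc, ← mul_assoc]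
        _ = S * S := by rw [hQQ]
    rwa [heq1] at hconj
  -- lower bound on the form of S
  have hlb : ∀ x : Fin r → ℝ, (1 - 2 * ε) * (x ⬝ᵥ x) ≤ x ⬝ᵥ (S *ᵥ x) := by
    intro x
    have hn := dotProduct_self_nonneg' x
    have h1 : x ⬝ᵥ ((S * S) *ᵥ x) ≤ (1 + ε) * (x ⬝ᵥ (S *ᵥ x)) := by
      have := hkey.dotProduct_mulVec_nonneg x
      rw [star_trivial, sub_mulVec, smul_mulVec, dotProduct_sub, dotProduct_smul,
        smul_eq_mul] at this
      linarith
    have h2 : (1 - ε) * (x ⬝ᵥ x) ≤ x ⬝ᵥ ((S * S) *ᵥ x) := by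
      have := (abs_le.1 (hT x)).1
      linarith
    nlinarith [hform x, hn, hε, h1, h2, mul_nonneg (mul_nonneg hε hε) hn]
  -- combined two-sided bound
  have hbnd : ∀ x : Fin r → ℝ, |x ⬝ᵥ (S *ᵥ x) - x ⬝ᵥ x| ≤ 2 * ε * (x ⬝ᵥ x) := by
    intro x
    have hn := dotProduct_self_nonneg' x
    rw [abs_le]
    constructor
    · have := hlb x; nlinarith
    · have := hub x; nlinarith
  -- entry extraction
  intro i j
  have hsji : S j i = S i j := by
    have := hS.1.apply j i
    simpa using this.symm
  by_cases hij : i = j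
  · subst hij
    have h1 := hbnd (Pi.single i 1)
    have e1 : (Pi.single i 1 : Fin r → ℝ) ⬝ᵥ (Pi.single i 1) = 1 := by
      rw [dotProduct_single]
      simp
    have e2 : (Pi.single i 1 : Fin r → ℝ) ⬝ᵥ (S *ᵥ Pi.single i 1) = S i i := by
      rw [mulVec_single, single_dotProduct]
      simp
    rw [e1, e2] at h1
    simpa [Matrix.one_apply_eq] using h1
  · -- use x = e_i + e_j and y = e_i - e_j
    set a : Fin r → ℝ := Pi.single i 1
    set b : Fin r → ℝ := Pi.single j 1
    have hab : a ⬝ᵥ b = 0 := by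
      rw [dotProduct_single]
      simp [a, Pi.single_eq_of_ne (Ne.symm hij)]
    have haa : a ⬝ᵥ a = 1 := by rw [dotProduct_single]; simp [a]
    have hbb : b ⬝ᵥ b = 1 := by rw [dotProduct_single]; simp [b]
    have hba : b ⬝ᵥ a = 0 := by
      rw [dotProduct_single]
      simp [b, Pi.single_eq_of_ne hij]
    have haSa : a ⬝ᵥ (S *ᵥ a) = S i i := by
      rw [mulVec_single, single_dotProduct]; simp [a]
    have hbSb : b ⬝ᵥ (S *ᵥ b) = S j j := by
      rw [mulVec_single, single_dotProduct]; simp [b]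
    have haSb : a ⬝ᵥ (S *ᵥ b) = S i j := by
      rw [mulVec_single, single_dotProduct]; simp [a]
    have hbSa : b ⬝ᵥ (S *ᵥ a) = S j i := by
      rw [mulVec_single, single_dotProduct]; simp [b]
    have hP := hbnd (a + b)
    have hN := hbnd (a - b)
    have eP1 : (a + b) ⬝ᵥ (a + b) = 2 := by
      rw [add_dotProduct, dotProduct_add, dotProduct_add, haa, hbb, hab, hba]; ring
    have eN1 : (a - b) ⬝ᵥ (a - b) = 2 := by
      rw [sub_dotProduct, dotProduct_sub, dotProduct_sub, haa, hbb, hab, hba]; ring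
    have eP2 : (a + b) ⬝ᵥ (S *ᵥ (a + b)) = S i i + S j j + 2 * S i j := by
      rw [mulVec_add, add_dotProduct, dotProduct_add, dotProduct_add, haSa, hbSb, haSb, hbSa,
        hsji]
      ring
    have eN2 : (a - b) ⬝ᵥ (S *ᵥ (a - b)) = S i i + S j j - 2 * S i j := by
      rw [mulVec_sub, sub_dotProduct, dotProduct_sub, dotProduct_sub, haSa, hbSb, haSb, hbSa,
        hsji]
      ring
    rw [eP1, eP2] at hP
    rw [eN1, eN2] at hN
    have h1 := abs_le.1 hP
    have h2 := abs_le.1 hN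
    rw [Matrix.one_apply_ne hij, sub_zero, abs_le]
    constructor <;> [linarith [h1.1, h2.2]; linarith [h1.2, h2.1]]

lemma tendsto_one_of_sq {S : ℝ → Mat r}
    (hpsd : ∀ᶠ α in atTop, (S α).PosSemidef)
    (h : Tendsto (fun α => S α * S α) atTop (𝓝 1)) :
    Tendsto S atTop (𝓝 1) := by
  set ε : ℝ → ℝ := fun α => ∑ i, ∑ j, |(S α * S α - 1) i j| with hεdef
  have hεnonneg : ∀ α, 0 ≤ ε α := fun α =>
    Finset.sum_nonneg fun i _ => Finset.sum_nonneg fun j _ => abs_nonneg _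
  have hεlim : Tendsto ε atTop (𝓝 0) := by
    have hsub : Tendsto (fun α => S α * S α - 1) atTop (𝓝 0) := by
      simpa using h.sub (tendsto_const_nhds (x := (1 : Mat r)))
    have hentry : ∀ i j, Tendsto (fun α => |(S α * S α - 1) i j|) atTop (𝓝 0) := by
      intro i j
      have h1 : Tendsto (fun α => (S α * S α - 1) i j) atTop (𝓝 0) := by
        have hc : Continuous fun M : Mat r => M i j :=
          (continuous_apply j).comp (continuous_apply i)
        have := (hc.tendsto (0 : Mat r)).comp hsub
        exact this
      simpa using h1.abs
    have := tendsto_finset_sum (Finset.univ : Finset (Fin r))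
      (fun i _ => tendsto_finset_sum (Finset.univ : Finset (Fin r))
        (fun j _ => hentry i j))
    simpa [hεdef] using this
  have hbound : ∀ᶠ α in atTop, ∀ i j, |S α i j - (1 : Mat r) i j| ≤ 2 * ε α := by
    filter_upwards [hpsd] with α hα
    refine entry_est hα (hεnonneg α) ?_
    intro x
    have h1 := form_abs_bound (S α * S α - 1) x
    rw [sub_mulVec, one_mulVec, dotProduct_sub] at h1
    exact h1
  refine tendsto_pi_nhds.2 fun i => tendsto_pi_nhds.2 fun j => ?_
  have h0 : Tendsto (fun α => S α i j - (1 : Mat r) i j) atTop (𝓝 0) := by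
    refine squeeze_zero_norm' ?_ (by simpa using hεlim.const_mul 2)
    filter_upwards [hbound] with α hα
    simpa using hα i j
  have := h0.add (tendsto_const_nhds (x := (1 : Mat r) i j))
  simpa using this


lemma exists_smul_sub_one_posDef (hr : 1 ≤ r) {v : Mat r} (hv : v.PosDef) :
    ∃ c : ℝ, 0 < c ∧ (c • v - 1).PosDef := by
  set K : Set (Fin r → ℝ) := {x | x ⬝ᵥ x = 1} with hK
  have hKc : IsCompact K := by
    apply Metric.isCompact_of_isClosed_isBounded
    · exact isClosed_eq (continuous_id.dotProduct continuous_id) continuous_const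
    · refine Bornology.IsBounded.subset
        (Metric.isBounded_closedBall (x := (0 : Fin r → ℝ)) (r := 1)) ?_
      intro x hx
      simp only [Metric.mem_closedBall, dist_zero_right]
      rw [pi_norm_le_iff_of_nonneg zero_le_one]
      intro i
      have h1 : x i * x i ≤ 1 := by
        have h2 : x i * x i ≤ x ⬝ᵥ x := Finset.single_le_sum
          (f := fun k => x k * x k) (fun k _ => mul_self_nonneg _) (Finset.mem_univ i)
        have h3 : x ⬝ᵥ x = 1 := hx
        linarith
      rw [Real.norm_eq_abs, abs_le]
      constructor <;> nlinarith
  have hKne : K.Nonempty := by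
    refine ⟨Pi.single ⟨0, hr⟩ 1, ?_⟩
    show (Pi.single (⟨0, hr⟩ : Fin r) (1:ℝ)) ⬝ᵥ (Pi.single ⟨0, hr⟩ 1) = 1
    rw [dotProduct_single]
    simp
  have hcont : ContinuousOn (fun x : Fin r → ℝ => x ⬝ᵥ (v *ᵥ x)) K :=
    (continuous_id.dotProduct (continuous_const.matrix_mulVec continuous_id)).continuousOn
  obtain ⟨x₀, hx₀K, hx₀min⟩ := hKc.exists_isMinOn hKne hcont
  have hx₀ne : x₀ ≠ 0 := by
    intro h
    rw [h] at hx₀K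
    have : (0 : Fin r → ℝ) ⬝ᵥ (0 : Fin r → ℝ) = 1 := hx₀K
    simp at this
  have hm : 0 < x₀ ⬝ᵥ (v *ᵥ x₀) := by
    have := hv.dotProduct_mulVec_pos hx₀ne
    simpa using this
  set m := x₀ ⬝ᵥ (v *ᵥ x₀) with hmdef
  have hvlb : ∀ x : Fin r → ℝ, m * (x ⬝ᵥ x) ≤ x ⬝ᵥ (v *ᵥ x) := by
    intro x
    by_cases hx : x = 0
    · simp [hx]
    · have hn : 0 < x ⬝ᵥ x := by
        have := dotProduct_star_self_pos_iff.2 hx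
        simpa using this
      set s := Real.sqrt (x ⬝ᵥ x) with hs
      have hspos : 0 < s := Real.sqrt_pos.2 hn
      have hss : s * s = x ⬝ᵥ x := Real.mul_self_sqrt hn.le
      have hyK : (s⁻¹ • x) ∈ K := by
        show (s⁻¹ • x) ⬝ᵥ (s⁻¹ • x) = 1
        rw [smul_dotProduct, dotProduct_smul, smul_eq_mul, smul_eq_mul, ← hss]
        field_simp
      have h1 : m ≤ (s⁻¹ • x) ⬝ᵥ (v *ᵥ (s⁻¹ • x)) := hx₀min hyK
      have h2 : (s⁻¹ • x) ⬝ᵥ (v *ᵥ (s⁻¹ • x)) = s⁻¹ * (s⁻¹ * (x ⬝ᵥ (v *ᵥ x))) := by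
        rw [mulVec_smul, smul_dotProduct, dotProduct_smul, smul_eq_mul, smul_eq_mul]
      rw [h2] at h1
      have h3 : m * (s * s) ≤ x ⬝ᵥ (v *ᵥ x) := by
        have h4 := mul_le_mul_of_nonneg_left h1 (le_of_lt (mul_pos hspos hspos))
        calc m * (s * s) = s * s * m := by ring
          _ ≤ s * s * (s⁻¹ * (s⁻¹ * (x ⬝ᵥ (v *ᵥ x)))) := h4
          _ = x ⬝ᵥ (v *ᵥ x) := by field_simp
      rwa [hss] at h3
  refine ⟨2 / m, by positivity, PosDef.of_dotProduct_mulVec_pos ?_ fun x hx => ?_⟩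
  · show ((2 / m) • v - 1)ᴴ = (2 / m) • v - 1
    rw [conjTranspose_sub, conjTranspose_smul, star_trivial, conjTranspose_one, hv.1.eq]
  · have hn : 0 < x ⬝ᵥ x := by
      have := dotProduct_star_self_pos_iff.2 hx
      simpa using this
    have h1 := hvlb x
    have h2 : (2 / m) * (x ⬝ᵥ (v *ᵥ x)) ≥ 2 * (x ⬝ᵥ x) := by
      rw [ge_iff_le, div_mul_eq_mul_div, le_div_iff₀ hm]
      nlinarith
    show 0 < star x ⬝ᵥ (((2 / m) • v - 1) *ᵥ x)
    rw [star_trivial, sub_mulVec, smul_mulVec, one_mulVec, dotProduct_sub,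
      dotProduct_smul, smul_eq_mul]
    linarith

lemma aux_tendsto_zero {f g : Mat r → ℝ}
    (hg : ContinuousOn g {x : Mat r | x.PosDef})
    (heq : ∀ x y : Mat r, x.PosDef → y.PosDef →
      f x + g (msqrt (1 + x) * y * msqrt (1 + x)) =
        g y + f (msqrt (1 + y) * x * msqrt (1 + y)))
    (hlim : Tendsto (fun α : ℝ => f (α • (1 : Mat r))) (𝓝[>] 0) (𝓝 0))
    {β : ℝ → ℝ} {w : ℝ → Mat r} {w₀ : Mat r}
    (hβpos : ∀ᶠ α in atTop, 0 < β α) (hβ : Tendsto β atTop (𝓝 0))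
    (hw : ∀ᶠ α in atTop, (w α - 1).PosDef) (hwlim : Tendsto w atTop (𝓝 w₀))
    (hw₀ : (w₀ - 1).PosDef) :
    Tendsto (fun α => f (β α • w α)) atTop (𝓝 0) := by
  have hβ' : Tendsto β atTop (𝓝[>] (0 : ℝ)) :=
    tendsto_nhdsWithin_iff.2 ⟨hβ, hβpos⟩
  have key : ∀ᶠ α in atTop, f (β α • w α)
      = f (β α • (1 : Mat r)) + g ((1 + β α) • (w α - 1)) - g (w α - 1) := by
    filter_upwards [hβpos, hw] with α hα hwα
    have h1 : ((β α) • (1 : Mat r)).PosDef := posDef_smul hα Matrix.PosDef.one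
    have h2 := heq ((β α) • 1) (w α - 1) h1 hwα
    have e2 : msqrt ((1 : Mat r) + β α • 1) = Real.sqrt (1 + β α) • 1 := by
      rw [show (1 : Mat r) + β α • 1 = (1 + β α) • 1 by rw [add_smul, one_smul],
        msqrt_smul_one (by linarith)]
    have e3 : msqrt ((1 : Mat r) + β α • 1) * (w α - 1) * msqrt ((1 : Mat r) + β α • 1)
        = (1 + β α) • (w α - 1) := by
      rw [e2, smul_mul_assoc, mul_smul_comm, one_mul, mul_one, smul_smul,
        Real.mul_self_sqrt (by linarith)]
    have h1w : ((1 : Mat r) + (w α - 1)).PosSemidef :=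
      (Matrix.PosDef.one.add hwα).posSemidef
    have e4 : msqrt (1 + (w α - 1)) * (β α • (1 : Mat r)) * msqrt (1 + (w α - 1))
        = β α • w α := by
      rw [mul_smul_one_mul, msqrt_mul_self h1w]
      congr 1
      abel
    rw [e3, e4] at h2
    linarith
  have l1 : Tendsto (fun α => f (β α • (1 : Mat r))) atTop (𝓝 0) := hlim.comp hβ'
  have hwsub : Tendsto (fun α => w α - 1) atTop (𝓝 (w₀ - 1)) :=
    hwlim.sub tendsto_const_nhds
  have hcw : ContinuousWithinAt g {x : Mat r | x.PosDef} (w₀ - 1) := hg _ hw₀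
  have hgw : Tendsto (fun α => g (w α - 1)) atTop (𝓝 (g (w₀ - 1))) := by
    refine Tendsto.comp hcw (tendsto_nhdsWithin_iff.2 ⟨hwsub, ?_⟩)
    filter_upwards [hw] with α hα using hα
  have hg2 : Tendsto (fun α => g ((1 + β α) • (w α - 1))) atTop (𝓝 (g (w₀ - 1))) := by
    have hsm : Tendsto (fun α => (1 + β α) • (w α - 1)) atTop (𝓝 (w₀ - 1)) := by
      have h1 : Tendsto (fun α => 1 + β α) atTop (𝓝 (1 : ℝ)) := by
        simpa using (tendsto_const_nhds (x := (1 : ℝ))).add hβ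
      have := h1.smul hwsub
      simpa using this
    refine Tendsto.comp hcw (tendsto_nhdsWithin_iff.2 ⟨hsm, ?_⟩)
    filter_upwards [hβpos, hw] with α h1 h2
    exact posDef_smul (by linarith) h2
  have hfinal := (l1.add hg2).sub hgw
  rw [show (0 : ℝ) + g (w₀ - 1) - g (w₀ - 1) = 0 by ring] at hfinal
  exact Filter.Tendsto.congr' (key.mono fun α h => h.symm) hfinal


lemma herm_transpose {S : Mat r} (hS : S.IsHermitian) : Sᵀ = S := by
  ext i j
  have h1 : S i j = S j i := by simpa using hS.apply j i
  rw [Matrix.transpose_apply]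
  exact h1.symm

lemma conj_smul (B : Mat r) (c : ℝ) (X : Mat r) : B * (c • X) * B = c • (B * X * B) := by
  rw [mul_smul_comm, smul_mul_assoc]

lemma smul_one_conj (c : ℝ) (X : Mat r) :
    (c • (1 : Mat r)) * X * (c • (1 : Mat r)) = (c * c) • X := by
  rw [smul_mul_assoc, one_mul, mul_smul_comm, mul_one, smul_smul]

lemma smul_conj (c : ℝ) (B X : Mat r) : (c • B) * X * (c • B) = (c * c) • (B * X * B) := by
  simp [smul_mul_assoc, mul_smul_comm, smul_smul]

lemma posDef_conj {B M : Mat r} (hB : B.IsHermitian) (hBB : (B * B).PosDef) (hM : M.PosDef) :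
    (B * M * B).PosDef := by
  refine PosDef.of_dotProduct_mulVec_pos ?_ fun x hx => ?_
  · show (B * M * B)ᴴ = B * M * B
    simp [conjTranspose_mul, herm_transpose hB, herm_transpose hM.1, mul_assoc]
  · have hBx : B *ᵥ x ≠ 0 := by
      intro h0
      have h1 : (B * B) *ᵥ x = 0 := by rw [← mulVec_mulVec, h0, mulVec_zero]
      have h2 := hBB.dotProduct_mulVec_pos hx
      rw [h1] at h2
      simp at h2
    have h3 := hM.dotProduct_mulVec_pos hBx
    rw [star_trivial] at h3
    rw [star_trivial]
    have e1 : (B * M * B) *ᵥ x = B *ᵥ (M *ᵥ (B *ᵥ x)) := by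
      rw [← mulVec_mulVec, ← mulVec_mulVec]
    rw [e1, symm_dot hB x (M *ᵥ (B *ᵥ x))]
    exact h3

lemma key_identity {f g : Mat r → ℝ}
    (heq : ∀ x y : Mat r, x.PosDef → y.PosDef →
      f x + g (msqrt (1 + x) * y * msqrt (1 + x)) =
        g y + f (msqrt (1 + y) * x * msqrt (1 + y)))
    {u z : Mat r} (hu : u.PosDef) (hz : z.PosDef) {α : ℝ} (hα : 0 < α) :
    f ((1 + 2 * α)⁻¹ • z) + f ((2 * α)⁻¹ • u)
      - f (msqrt (1 + (2 * α)⁻¹ • u) * ((1 + 2 * α)⁻¹ • z) * msqrt (1 + (2 * α)⁻¹ • u)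
            + (2 * α)⁻¹ • u)
    = f z
      + f (msqrt (1 + (2 * α) • ((1 : Mat r) + (1 + 2 * α)⁻¹ • z)) * ((2 * α)⁻¹ • u)
            * msqrt (1 + (2 * α) • ((1 : Mat r) + (1 + 2 * α)⁻¹ • z)))
      - f ((1 + 2 * α) •
            (msqrt (1 + (2 * α)⁻¹ • u) * ((1 + 2 * α)⁻¹ • z) * msqrt (1 + (2 * α)⁻¹ • u)
              + (2 * α)⁻¹ • u)) := by
  have hA : (0 : ℝ) < 1 + 2 * α := by linarith
  have h2α : (0 : ℝ) < 2 * α := by linarith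
  set Q : Mat r := msqrt (1 + (2 * α)⁻¹ • u) with hQdef
  have hx₂ : ((1 + 2 * α)⁻¹ • z).PosDef := posDef_smul (inv_pos.2 hA) hz
  have hx₂' : ((2 * α)⁻¹ • u).PosDef := posDef_smul (inv_pos.2 h2α) hu
  have h1x₂ : ((1 : Mat r) + (1 + 2 * α)⁻¹ • z).PosDef := Matrix.PosDef.one.add hx₂
  have h1x₂' : ((1 : Mat r) + (2 * α)⁻¹ • u).PosDef := Matrix.PosDef.one.add hx₂'
  have h2α1 : ((2 * α) • (1 : Mat r)).PosDef := posDef_smul h2α Matrix.PosDef.one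
  have hy₂ : ((2 * α) • ((1 : Mat r) + (1 + 2 * α)⁻¹ • z)).PosDef := posDef_smul h2α h1x₂
  have hQpsd : Q.PosSemidef := msqrt_posSemidef _
  have hQQ : Q * Q = 1 + (2 * α)⁻¹ • u := msqrt_mul_self h1x₂'.posSemidef
  have hQconj : (Q * ((1 + 2 * α)⁻¹ • z) * Q).PosSemidef := by
    have := hx₂.posSemidef.mul_mul_conjTranspose_same Q
    rwa [hQpsd.1.eq] at this
  have hx₃ : (Q * ((1 + 2 * α)⁻¹ • z) * Q + (2 * α)⁻¹ • u).PosDef :=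
    Matrix.PosDef.posSemidef_add hQconj hx₂'
  have h1x₃ : ((1 : Mat r) + (Q * ((1 + 2 * α)⁻¹ • z) * Q + (2 * α)⁻¹ • u)).PosDef :=
    Matrix.PosDef.one.add hx₃
  have hMs : msqrt ((1 : Mat r) + (2 * α) • 1) = Real.sqrt (1 + 2 * α) • 1 := by
    rw [show (1 : Mat r) + (2 * α) • 1 = (1 + 2 * α) • 1 by rw [add_smul, one_smul],
      msqrt_smul_one hA.le]
  -- instance 1
  have I1 := heq ((1 + 2 * α)⁻¹ • z) ((2 * α) • 1) hx₂ h2α1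
  rw [mul_smul_one_mul, msqrt_mul_self h1x₂.posSemidef, hMs, smul_one_conj,
    Real.mul_self_sqrt hA.le, smul_smul, mul_inv_cancel₀ (ne_of_gt hA), one_smul] at I1
  -- instance 2
  have I2 := heq ((2 * α)⁻¹ • u) ((2 * α) • ((1 : Mat r) + (1 + 2 * α)⁻¹ • z)) hx₂' hy₂
  have hQ2 : Q * ((2 * α) • ((1 : Mat r) + (1 + 2 * α)⁻¹ • z)) * Q
      = (2 * α) • ((1 : Mat r) + (Q * ((1 + 2 * α)⁻¹ • z) * Q + (2 * α)⁻¹ • u)) := by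
    rw [conj_smul]
    congr 1
    rw [mul_add, mul_one, add_mul, hQQ]
    abel
  rw [← hQdef, hQ2] at I2
  -- instance 3
  have I3 := heq (Q * ((1 + 2 * α)⁻¹ • z) * Q + (2 * α)⁻¹ • u) ((2 * α) • 1) hx₃ h2α1
  rw [mul_smul_one_mul, msqrt_mul_self h1x₃.posSemidef, hMs, smul_one_conj,
    Real.mul_self_sqrt hA.le] at I3
  linarith [I1, I2, I3]

end AddAux

open AddAux in
/-- **Additivity from a symmetric functional equation.**  If continuous `f, g` on `Ω₊`
satisfy `f(x) + g(P((e+x)^{1/2})y) = g(y) + f(P((e+y)^{1/2})x)` and `f(α e) → 0` as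
`α → 0⁺`, then `f` is additive on `Ω₊`. -/
theorem additive_from_symmetric_equation {r : ℕ} (hr : 1 ≤ r) (f g : Mat r → ℝ)
    (hf : ContinuousOn f {x : Mat r | x.PosDef})
    (hg : ContinuousOn g {x : Mat r | x.PosDef})
    (heq : ∀ x y : Mat r, x.PosDef → y.PosDef →
      f x + g (msqrt (1 + x) * y * msqrt (1 + x)) =
        g y + f (msqrt (1 + y) * x * msqrt (1 + y)))
    (hlim : Tendsto (fun α : ℝ => f (α • (1 : Mat r))) (𝓝[>] 0) (𝓝 0)) :
    ∀ u z : Mat r, u.PosDef → z.PosDef → f u + f z = f (u + z) := by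
  intro u z hu hz
  obtain ⟨cz, hcz, hczp⟩ := exists_smul_sub_one_posDef hr hz
  obtain ⟨cu, hcu, hcup⟩ := exists_smul_sub_one_posDef hr hu
  -- basic scalar limits
  have h2top : Tendsto (fun α : ℝ => 2 * α) atTop atTop :=
    tendsto_id.const_mul_atTop two_pos
  have hAtop : Tendsto (fun α : ℝ => 1 + 2 * α) atTop atTop :=
    tendsto_atTop_add_const_left _ 1 h2top
  have h2inv : Tendsto (fun α : ℝ => (2 * α)⁻¹) atTop (𝓝 0) := h2top.inv_tendsto_atTop
  have hAinv : Tendsto (fun α : ℝ => (1 + 2 * α)⁻¹) atTop (𝓝 0) := hAtop.inv_tendsto_atTop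
  -- abbreviations (as plain functions)
  set Q : ℝ → Mat r := fun α => msqrt (1 + (2 * α)⁻¹ • u) with hQdef
  set X3 : ℝ → Mat r :=
    fun α => Q α * ((1 + 2 * α)⁻¹ • z) * Q α + (2 * α)⁻¹ • u with hX3def
  set M' : ℝ → Mat r :=
    fun α => msqrt (1 + (2 * α) • ((1 : Mat r) + (1 + 2 * α)⁻¹ • z)) with hM'def
  -- L1 : f ((1+2α)⁻¹ • z) → 0
  have L1 : Tendsto (fun α : ℝ => f ((1 + 2 * α)⁻¹ • z)) atTop (𝓝 0) := by
    have h := aux_tendsto_zero hg heq hlim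
      (β := fun α : ℝ => ((1 + 2 * α) * cz)⁻¹) (w := fun _ => cz • z) (w₀ := cz • z)
      (by filter_upwards [eventually_ge_atTop (1 : ℝ)] with α hα;
          exact inv_pos.2 (mul_pos (by linarith) hcz))
      ((hAtop.atTop_mul_const hcz).inv_tendsto_atTop)
      (Eventually.of_forall fun _ => hczp) tendsto_const_nhds hczp
    refine Filter.Tendsto.congr' ?_ h
    filter_upwards [eventually_ge_atTop (1 : ℝ)] with α hα
    have hA : (0 : ℝ) < 1 + 2 * α := by linarith
    rw [smul_smul, mul_inv, mul_assoc, inv_mul_cancel₀ (ne_of_gt hcz), mul_one]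
  -- L2 : f ((2α)⁻¹ • u) → 0
  have L2 : Tendsto (fun α : ℝ => f ((2 * α)⁻¹ • u)) atTop (𝓝 0) := by
    have h := aux_tendsto_zero hg heq hlim
      (β := fun α : ℝ => (2 * α * cu)⁻¹) (w := fun _ => cu • u) (w₀ := cu • u)
      (by filter_upwards [eventually_ge_atTop (1 : ℝ)] with α hα;
          exact inv_pos.2 (mul_pos (by linarith) hcu))
      ((h2top.atTop_mul_const hcu).inv_tendsto_atTop)
      (Eventually.of_forall fun _ => hcup) tendsto_const_nhds hcup
    refine Filter.Tendsto.congr' ?_ h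
    filter_upwards [eventually_ge_atTop (1 : ℝ)] with α hα
    rw [smul_smul, mul_inv, mul_assoc, inv_mul_cancel₀ (ne_of_gt hcu), mul_one]
  -- q limit
  have Lq : Tendsto Q atTop (𝓝 1) := by
    refine tendsto_one_of_sq (Eventually.of_forall fun α => msqrt_posSemidef _) ?_
    have hlim1 : Tendsto (fun α : ℝ => (1 : Mat r) + (2 * α)⁻¹ • u) atTop (𝓝 1) := by
      have h1 := (tendsto_const_nhds (x := (1 : Mat r))).add (h2inv.smul_const u)
      simpa using h1
    refine Filter.Tendsto.congr' ?_ hlim1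
    filter_upwards [eventually_ge_atTop (1 : ℝ)] with α hα
    have h2α : (0 : ℝ) < 2 * α := by linarith
    exact (msqrt_mul_self
      (Matrix.PosDef.one.add (posDef_smul (inv_pos.2 h2α) hu)).posSemidef).symm
  -- S' limit
  set S' : ℝ → Mat r := fun α => (Real.sqrt (2 * α))⁻¹ • M' α with hS'def
  have LS' : Tendsto S' atTop (𝓝 1) := by
    refine tendsto_one_of_sq
      (Eventually.of_forall fun α =>
        posSemidef_smul (inv_nonneg.2 (Real.sqrt_nonneg _)) (msqrt_posSemidef _)) ?_
    have hlim2 : Tendsto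
        (fun α : ℝ => (2 * α)⁻¹ • (1 : Mat r) + ((1 : Mat r) + (1 + 2 * α)⁻¹ • z))
        atTop (𝓝 1) := by
      have h1 := (h2inv.smul_const (1 : Mat r)).add
        ((tendsto_const_nhds (x := (1 : Mat r))).add (hAinv.smul_const z))
      simpa using h1
    refine Filter.Tendsto.congr' ?_ hlim2
    filter_upwards [eventually_ge_atTop (1 : ℝ)] with α hα
    have h2α : (0 : ℝ) < 2 * α := by linarith
    have hA : (0 : ℝ) < 1 + 2 * α := by linarith
    have hMM := msqrt_mul_self (Matrix.PosDef.one.add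
      (posDef_smul h2α (Matrix.PosDef.one.add (posDef_smul (inv_pos.2 hA) hz)))).posSemidef
    show (2 * α)⁻¹ • (1 : Mat r) + ((1 : Mat r) + (1 + 2 * α)⁻¹ • z) = S' α * S' α
    rw [hS'def]
    show _ = ((Real.sqrt (2 * α))⁻¹ • M' α) * ((Real.sqrt (2 * α))⁻¹ • M' α)
    rw [smul_mul_smul_comm, ← mul_inv, Real.mul_self_sqrt h2α.le, hM'def]
    rw [hMM, smul_add, smul_smul, inv_mul_cancel₀ (ne_of_gt h2α), one_smul]
  -- W limit
  have LW : Tendsto (fun α : ℝ => M' α * ((2 * α)⁻¹ • u) * M' α) atTop (𝓝 u) := by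
    have h1 : Tendsto (fun α => S' α * u * S' α) atTop (𝓝 u) := by
      have := (LS'.mul (tendsto_const_nhds (x := u))).mul LS'
      simpa using this
    refine Filter.Tendsto.congr' ?_ h1
    filter_upwards [eventually_ge_atTop (1 : ℝ)] with α hα
    have h2α : (0 : ℝ) < 2 * α := by linarith
    rw [hS'def]
    show (Real.sqrt (2 * α))⁻¹ • M' α * u * ((Real.sqrt (2 * α))⁻¹ • M' α)
      = M' α * ((2 * α)⁻¹ • u) * M' α
    rw [smul_conj, ← mul_inv, Real.mul_self_sqrt h2α.le, conj_smul]
  have LWpos : ∀ᶠ α : ℝ in atTop, (M' α * ((2 * α)⁻¹ • u) * M' α).PosDef := by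
    filter_upwards [eventually_ge_atTop (1 : ℝ)] with α hα
    have h2α : (0 : ℝ) < 2 * α := by linarith
    have hA : (0 : ℝ) < 1 + 2 * α := by linarith
    refine posDef_conj (msqrt_posSemidef _).1 ?_ (posDef_smul (inv_pos.2 h2α) hu)
    rw [hM'def]
    show (msqrt (1 + (2 * α) • ((1 : Mat r) + (1 + 2 * α)⁻¹ • z)) *
      msqrt (1 + (2 * α) • ((1 : Mat r) + (1 + 2 * α)⁻¹ • z))).PosDef
    rw [msqrt_mul_self (Matrix.PosDef.one.add
      (posDef_smul h2α (Matrix.PosDef.one.add (posDef_smul (inv_pos.2 hA) hz)))).posSemidef]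
    exact Matrix.PosDef.one.add
      (posDef_smul h2α (Matrix.PosDef.one.add (posDef_smul (inv_pos.2 hA) hz)))
  have LWf : Tendsto (fun α : ℝ => f (M' α * ((2 * α)⁻¹ • u) * M' α)) atTop (𝓝 (f u)) :=
    Tendsto.comp (hf u hu) (tendsto_nhdsWithin_iff.2 ⟨LW, LWpos⟩)
  -- v'' limit
  have hv''eq : (fun α : ℝ => Q α * z * Q α + ((2 * α)⁻¹ + 1) • u)
      =ᶠ[atTop] (fun α : ℝ => (1 + 2 * α) • X3 α) := by
    filter_upwards [eventually_ge_atTop (1 : ℝ)] with α hα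
    have h2α : (0 : ℝ) < 2 * α := by linarith
    have hA : (0 : ℝ) < 1 + 2 * α := by linarith
    rw [hX3def]
    show Q α * z * Q α + ((2 * α)⁻¹ + 1) • u
      = (1 + 2 * α) • (Q α * ((1 + 2 * α)⁻¹ • z) * Q α + (2 * α)⁻¹ • u)
    rw [conj_smul, smul_add, smul_smul, smul_smul, mul_inv_cancel₀ (ne_of_gt hA), one_smul]
    congr 2
    field_simp
  have Lv'' : Tendsto (fun α : ℝ => (1 + 2 * α) • X3 α) atTop (𝓝 (u + z)) := by
    have t1 : Tendsto (fun α => Q α * z * Q α) atTop (𝓝 z) := by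
      have := (Lq.mul (tendsto_const_nhds (x := z))).mul Lq
      simpa using this
    have t2 : Tendsto (fun α : ℝ => ((2 * α)⁻¹ + 1) • u) atTop (𝓝 u) := by
      have h1 : Tendsto (fun α : ℝ => (2 * α)⁻¹ + 1) atTop (𝓝 1) := by
        simpa using h2inv.add_const 1
      have := h1.smul_const u
      simpa using this
    have := t1.add t2
    rw [add_comm] at this
    exact Filter.Tendsto.congr' hv''eq this
  have Lv''pos : ∀ᶠ α : ℝ in atTop, ((1 + 2 * α) • X3 α).PosDef := by
    filter_upwards [eventually_ge_atTop (1 : ℝ)] with α hα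
    have h2α : (0 : ℝ) < 2 * α := by linarith
    have hA : (0 : ℝ) < 1 + 2 * α := by linarith
    refine posDef_smul hA ?_
    rw [hX3def]
    have hQpsd := msqrt_posSemidef (1 + (2 * α)⁻¹ • u)
    have hconj : (Q α * ((1 + 2 * α)⁻¹ • z) * Q α).PosSemidef := by
      have := (posDef_smul (inv_pos.2 hA) hz).posSemidef.mul_mul_conjTranspose_same (Q α)
      rwa [hQpsd.1.eq] at this
    exact Matrix.PosDef.posSemidef_add hconj (posDef_smul (inv_pos.2 h2α) hu)
  have Lv''f : Tendsto (fun α : ℝ => f ((1 + 2 * α) • X3 α)) atTop (𝓝 (f (u + z))) :=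
    Tendsto.comp (hf _ (hu.add hz)) (tendsto_nhdsWithin_iff.2 ⟨Lv'', Lv''pos⟩)
  -- L3 : f (X3 α) → 0
  have L3 : Tendsto (fun α : ℝ => f (X3 α)) atTop (𝓝 0) := by
    have hwev : ∀ᶠ α : ℝ in atTop, (cu • ((1 + 2 * α) • X3 α) - 1).PosDef := by
      filter_upwards [hv''eq, eventually_ge_atTop (1 : ℝ)] with α hα hα1
      rw [← hα]
      have h2α : (0 : ℝ) < 2 * α := by linarith
      have hqz : (cu • (Q α * z * Q α)).PosSemidef := by
        refine posSemidef_smul hcu.le ?_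
        have hQpsd := msqrt_posSemidef (1 + (2 * α)⁻¹ • u)
        have h5 := hz.posSemidef.mul_mul_conjTranspose_same (Q α)
        rwa [hQpsd.1.eq] at h5
      have P := (hcup.add (posDef_smul (mul_pos hcu (inv_pos.2 h2α)) hu)).add_posSemidef hqz
      have e : cu • (Q α * z * Q α + ((2 * α)⁻¹ + 1) • u) - 1
          = ((cu • u - 1) + (cu * (2 * α)⁻¹) • u) + cu • (Q α * z * Q α) := by
        module
      rwa [e]
    have hw0 : (cu • (u + z) - 1).PosDef := by
      have P := hcup.add_posSemidef (posSemidef_smul hcu.le hz.posSemidef)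
      have e : cu • (u + z) - 1 = (cu • u - 1) + cu • z := by module
      rwa [e]
    have h := aux_tendsto_zero hg heq hlim
      (β := fun α : ℝ => ((1 + 2 * α) * cu)⁻¹)
      (w := fun α : ℝ => cu • ((1 + 2 * α) • X3 α)) (w₀ := cu • (u + z))
      (by filter_upwards [eventually_ge_atTop (1 : ℝ)] with α hα;
          exact inv_pos.2 (mul_pos (by linarith) hcu))
      ((hAtop.atTop_mul_const hcu).inv_tendsto_atTop)
      hwev (Lv''.const_smul cu) hw0
    refine Filter.Tendsto.congr' ?_ h
    filter_upwards [eventually_ge_atTop (1 : ℝ)] with α hα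
    have hA : (0 : ℝ) < 1 + 2 * α := by linarith
    rw [smul_smul, smul_smul]
    have hsc : ((1 + 2 * α) * cu)⁻¹ * cu * (1 + 2 * α) = 1 := by
      field_simp
    rw [hsc, one_smul]
  -- combine
  have keyev : (fun α : ℝ => f ((1 + 2 * α)⁻¹ • z) + f ((2 * α)⁻¹ • u) - f (X3 α))
      =ᶠ[atTop] (fun α : ℝ => f z + f (M' α * ((2 * α)⁻¹ • u) * M' α)
        - f ((1 + 2 * α) • X3 α)) := by
    filter_upwards [eventually_ge_atTop (1 : ℝ)] with α hα
    exact key_identity heq hu hz (by linarith)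
  have lhs0 : Tendsto (fun α : ℝ => f ((1 + 2 * α)⁻¹ • z) + f ((2 * α)⁻¹ • u) - f (X3 α))
      atTop (𝓝 0) := by
    have h := (L1.add L2).sub L3
    simpa using h
  have rhs1 : Tendsto (fun α : ℝ => f z + f (M' α * ((2 * α)⁻¹ • u) * M' α)
      - f ((1 + 2 * α) • X3 α)) atTop (𝓝 (f z + f u - f (u + z))) :=
    ((tendsto_const_nhds (x := f z)).add LWf).sub Lv''f
  have hfinal := tendsto_nhds_unique (Filter.Tendsto.congr' keyev lhs0) rhs1
  linarith
end
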